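/- Suppose b ∈ ℓ² satisfies Lb = f and let b̃ be the unique minimal-ℓ²-norm element with Lb̃ = f. Then the residual function r(x) = ∑_{n∈ℕ} d_n^{-1/2}(b̃_n − b_n) g_n(x) is given by an absolutely convergent series for every x ∈ S, vanishes at each collocation point x_k (k = 1,…,Ñ), and satisfies the uniform bound sup_{x∈S} |r(x)| ≤ ‖(F_n d_n^{-1/2})_n‖_{ℓ²} · ‖b‖_{ℓ²}. In particular, the residual of the minimal-norm collocation solution is bounded uniformly on S by a constant times the norm of any exact feasible solution, independently of the number of collocation points. -/

import Mathlib

open scoped BigOperators ENNReal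

/-- the residual `r(x) = ∑ₙ dₙ^{-1/2}(b̃ₙ − bₙ)gₙ(x)` of the minimal-norm
collocation solution is given by an absolutely convergent series, vanishes at the
collocation points, and is bounded uniformly on `S` by
`‖(Fₙ dₙ^{-1/2})ₙ‖_{ℓ²}·‖b‖_{ℓ²}` for any exact feasible solution `b`. -/
theorem residual_uniform_bound
    (N : ℕ) (hN : 1 ≤ N) (S : Type*)
    (d : ℕ → ℝ) (hd : ∀ n, 0 < d n)
    (g : ℕ → S → ℂ) (F : ℕ → ℝ) (hF0 : ∀ n, 0 ≤ F n)
    (hgF : ∀ n x, ‖g n x‖ ≤ F n)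
    (hFd : Memℓp (fun n => F n * d n ^ (-(1 : ℝ) / 2)) 2)
    (x : Fin N → S)
    (L : lp (fun _ : ℕ => ℂ) 2 →L[ℂ] EuclideanSpace ℂ (Fin N))
    (hL : ∀ b k, L b k = ∑' n, ((d n ^ (-(1 : ℝ) / 2) : ℝ) : ℂ) * b n * g n (x k))
    (f : EuclideanSpace ℂ (Fin N))
    (b btil : lp (fun _ : ℕ => ℂ) 2)
    (hb : L b = f) (hbtil : L btil = f)
    (hmin : ∀ a : lp (fun _ : ℕ => ℂ) 2, L a = f → ‖btil‖ ≤ ‖a‖) :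
    (∀ y : S, Summable fun n =>
      ‖((d n ^ (-(1 : ℝ) / 2) : ℝ) : ℂ) * (btil n - b n) * g n y‖) ∧
    (∀ k : Fin N,
      ∑' n, ((d n ^ (-(1 : ℝ) / 2) : ℝ) : ℂ) * (btil n - b n) * g n (x k) = 0) ∧
    (∀ y : S,
      ‖∑' n, ((d n ^ (-(1 : ℝ) / 2) : ℝ) : ℂ) * (btil n - b n) * g n y‖
        ≤ Real.sqrt (∑' n, (F n * d n ^ (-(1 : ℝ) / 2)) ^ 2) * ‖b‖) := by
  have h2 : (0:ℝ) < (2 : ℝ≥0∞).toReal := by norm_num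
  have hconj : ((2:ℝ≥0∞)).toReal.HolderConjugate ((2:ℝ≥0∞)).toReal := by
    rw [Real.holderConjugate_iff]; norm_num
  set r : ℕ → ℝ := fun n => d n ^ (-(1 : ℝ) / 2) with hr
  have hr0 : ∀ n, 0 < r n := fun n => Real.rpow_pos_of_pos (hd n) _
  have hU0 : ∀ n, 0 ≤ F n * r n := fun n => mul_nonneg (hF0 n) (hr0 n).le
  set U : lp (fun _ : ℕ => ℝ) 2 := ⟨fun n => F n * r n, hFd⟩ with hUdef
  -- auxiliary: the ℓ² element of norms of a complex ℓ² element
  have memnorm : ∀ c : lp (fun _ : ℕ => ℂ) 2, Memℓp (fun n => ‖c n‖) 2 := fun c =>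
    (memℓp_gen_iff h2).2 (by simpa using (memℓp_gen_iff h2).1 (lp.memℓp c))
  -- pointwise bound
  have hbound : ∀ (c : lp (fun _ : ℕ => ℂ) 2) (y : S) (n : ℕ),
      ‖((r n : ℝ) : ℂ) * c n * g n y‖ ≤ ‖U n‖ * ‖c n‖ := by
    intro c y n
    have h1 : ‖((r n : ℝ) : ℂ) * c n * g n y‖ = r n * ‖c n‖ * ‖g n y‖ := by
      rw [norm_mul, norm_mul, Complex.norm_real, Real.norm_eq_abs, abs_of_nonneg (hr0 n).le]
    have hUn : ‖U n‖ = F n * r n := by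
      rw [Real.norm_eq_abs, abs_of_nonneg (hU0 n)]
    rw [h1, hUn]
    calc r n * ‖c n‖ * ‖g n y‖ ≤ r n * ‖c n‖ * F n := by
          exact mul_le_mul_of_nonneg_left (hgF n y)
            (mul_nonneg (hr0 n).le (norm_nonneg _))
      _ = F n * r n * ‖c n‖ := by ring
  -- key summability
  have key : ∀ (c : lp (fun _ : ℕ => ℂ) 2) (y : S),
      Summable fun n => ‖((r n : ℝ) : ℂ) * c n * g n y‖ := by
    intro c y
    refine Summable.of_nonneg_of_le (fun n => norm_nonneg _) (fun n => hbound c y n) ?_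
    have := lp.summable_mul hconj U (⟨fun n => ‖c n‖, memnorm c⟩ : lp (fun _ : ℕ => ℝ) 2)
    simpa [Real.norm_eq_abs, abs_of_nonneg (norm_nonneg _)] using this
  refine ⟨?_, ?_, ?_⟩
  · intro y
    have := key (btil - b) y
    simpa [lp.coeFn_sub, Pi.sub_apply] using this
  · intro k
    have s1 : Summable fun n => ((r n : ℝ) : ℂ) * btil n * g n (x k) :=
      (key btil (x k)).of_norm
    have s2 : Summable fun n => ((r n : ℝ) : ℂ) * b n * g n (x k) :=
      (key b (x k)).of_norm
    have heq : (fun n => ((r n : ℝ) : ℂ) * (btil n - b n) * g n (x k)) =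
        fun n => ((r n : ℝ) : ℂ) * btil n * g n (x k) - ((r n : ℝ) : ℂ) * b n * g n (x k) := by
      funext n; ring
    rw [heq, s1.tsum_sub s2, ← hL btil k, ← hL b k, hb, hbtil, sub_self]
  · intro y
    -- U norm
    have hnormU : ‖U‖ = Real.sqrt (∑' n, (F n * r n) ^ 2) := by
      rw [lp.norm_eq_tsum_rpow (by norm_num) U, Real.sqrt_eq_rpow]
      norm_num
      congr 1
    -- minimal norm implies ‖btil - b‖ ≤ ‖b‖
    set K : Submodule ℂ (lp (fun _ : ℕ => ℂ) 2) := LinearMap.ker (L : lp (fun _ : ℕ => ℂ) 2 →ₗ[ℂ] EuclideanSpace ℂ (Fin N)) with hK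
    haveI : Nonempty K := ⟨⟨0, K.zero_mem⟩⟩
    have hinf : ‖btil - 0‖ = ⨅ w : K, ‖btil - w‖ := by
      rw [sub_zero]
      apply le_antisymm
      · refine le_ciInf fun w => ?_
        have hw : L (w : lp (fun _ : ℕ => ℂ) 2) = 0 := w.2
        have : L (btil - w) = f := by rw [map_sub, hbtil, hw, sub_zero]
        exact hmin _ this
      · have hb0 : BddBelow (Set.range fun w : K => ‖btil - w‖) := by
          refine ⟨0, ?_⟩; rintro _ ⟨w, rfl⟩; exact norm_nonneg _
        have := ciInf_le hb0 (⟨0, K.zero_mem⟩ : K)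
        simpa using this
    have horth := (Submodule.norm_eq_iInf_iff_inner_eq_zero (𝕜 := ℂ) K K.zero_mem).1 hinf
    have hmem : b - btil ∈ K := by
      simp only [hK, LinearMap.mem_ker]
      show L (b - btil) = 0
      rw [map_sub, hb, hbtil, sub_self]
    have hiz : (inner ℂ btil (b - btil) : ℂ) = 0 := by
      have h := horth (b - btil) hmem
      rwa [sub_zero] at h
    have hpyth : ‖b‖ ^ 2 = ‖btil‖ ^ 2 + ‖b - btil‖ ^ 2 := by
      have hb' : b = btil + (b - btil) := by abel
      calc ‖b‖ ^ 2 = ‖btil + (b - btil)‖ ^ 2 := by rw [← hb']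
        _ = ‖btil‖ ^ 2 + 2 * RCLike.re (inner ℂ btil (b - btil) : ℂ) + ‖b - btil‖ ^ 2 := by
            rw [@norm_add_sq ℂ]
        _ = ‖btil‖ ^ 2 + ‖b - btil‖ ^ 2 := by rw [hiz]; simp
    have h1 : ‖b - btil‖ ^ 2 ≤ ‖b‖ ^ 2 := by
      rw [hpyth]; exact le_add_of_nonneg_left (sq_nonneg _)
    have hle : ‖btil - b‖ ≤ ‖b‖ := by
      rw [norm_sub_rev]
      exact (pow_le_pow_iff_left₀ (norm_nonneg _) (norm_nonneg _)
        (by norm_num : (2:ℕ) ≠ 0)).1 h1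
    -- put together
    set c := btil - b with hc
    set C : lp (fun _ : ℕ => ℝ) 2 := ⟨fun n => ‖c n‖, memnorm c⟩ with hCdef
    have hnormC : ‖C‖ = ‖c‖ := by
      rw [lp.norm_eq_tsum_rpow (by norm_num) C, lp.norm_eq_tsum_rpow (by norm_num) c]
      congr 1
      apply tsum_congr; intro n
      congr 1
      simp [hCdef, Real.norm_eq_abs, abs_of_nonneg (norm_nonneg _)]
    have hsum := key c y
    have hsum' : Summable fun n => ‖((r n : ℝ) : ℂ) * (btil n - b n) * g n y‖ := by
      simpa [hc, lp.coeFn_sub, Pi.sub_apply] using hsum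
    have step1 : ‖∑' n, ((r n : ℝ) : ℂ) * (btil n - b n) * g n y‖
        ≤ ∑' n, ‖((r n : ℝ) : ℂ) * (btil n - b n) * g n y‖ :=
      norm_tsum_le_tsum_norm hsum'
    have step2 : (∑' n, ‖((r n : ℝ) : ℂ) * (btil n - b n) * g n y‖)
        ≤ ∑' n, ‖U n‖ * ‖C n‖ := by
      refine Summable.tsum_le_tsum (fun n => ?_) hsum' ?_
      · have := hbound c y n
        simpa [hc, hCdef, lp.coeFn_sub, Pi.sub_apply, Real.norm_eq_abs,
          abs_of_nonneg (norm_nonneg _)] using this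
      · exact lp.summable_mul hconj U C
    have step3 : (∑' n, ‖U n‖ * ‖C n‖) ≤ ‖U‖ * ‖C‖ :=
      lp.tsum_mul_le_mul_norm' hconj U C
    calc ‖∑' n, ((r n : ℝ) : ℂ) * (btil n - b n) * g n y‖
        ≤ ‖U‖ * ‖C‖ := step1.trans (step2.trans step3)
      _ = Real.sqrt (∑' n, (F n * r n) ^ 2) * ‖c‖ := by rw [hnormU, hnormC]
      _ ≤ Real.sqrt (∑' n, (F n * r n) ^ 2) * ‖b‖ := by
          exact mul_le_mul_of_nonneg_left (hc ▸ hle) (Real.sqrt_nonneg _)
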